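/- Let (E,e) be a matrix factorization of w over S with a connection ∇, θ = [∇,e], and let ∧ : Ω^{⊗q} → ⋀^q Ω denote the canonical quotient to the exterior power over S. Set Φ_q = (1/q!)·(∧ ⊗ 1_E) ∘ θ^q : E → ⋀^qΩ ⊗_S E, with Φ_{−1} = 0. Then for every q ≥ 0 and every x ∈ E, dw ∧ Φ_{q−1}(x) + (−1)^q (1_{⋀^qΩ} ⊗ e)(Φ_q(x)) = Φ_q(e(x)). Equivalently, Φ = Σ_q Φ_q (the exponential exp(at(E)) = Σ [∇,e]^q/q! of the Atiyah class) is a closed degree-0 morphism of w-curved modules from E to Ω_{dw} ⊗ E, where Ω_{dw} ⊗ E = (⊕_q ⋀^qΩ) ⊗_S E carries the curved differential (dw ∧ −) ⊗ 1 + γ ⊗ e with γ = (−1)^q on ⋀^qΩ. -/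

import Mathlib

set_option maxHeartbeats 1000000
set_option synthInstance.maxHeartbeats 400000

open scoped TensorProduct
open PiTensorProduct

lemma iotaMulti_snoc {R M : Type*} [CommRing R] [AddCommGroup M] [Module R M]
    (q : ℕ) (ω : Fin q → M) (μ : M) :
    ExteriorAlgebra.ιMulti R (q + 1) (Fin.snoc ω μ) =
      ExteriorAlgebra.ιMulti R q ω * ExteriorAlgebra.ι R μ := by
  rw [ExteriorAlgebra.ιMulti_apply, ExteriorAlgebra.ιMulti_apply, List.ofFn_succ',
    List.concat_eq_append, List.prod_append, List.prod_cons, List.prod_nil, mul_one]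
  simp [Fin.snoc_castSucc, Fin.snoc_last]

lemma iota_mul_iotaMulti {R M : Type*} [CommRing R] [AddCommGroup M] [Module R M]
    (q : ℕ) (ω : Fin q → M) (a : M) :
    ExteriorAlgebra.ι R a * ExteriorAlgebra.ιMulti R q ω =
      ((-1 : R) ^ q) • (ExteriorAlgebra.ιMulti R q ω * ExteriorAlgebra.ι R a) := by
  induction q with
  | zero => simp
  | succ q ih =>
    rw [ExteriorAlgebra.ιMulti_succ_apply]
    have hswap : ExteriorAlgebra.ι R a * ExteriorAlgebra.ι R (ω 0)
        = -(ExteriorAlgebra.ι R (ω 0) * ExteriorAlgebra.ι R a) :=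
      eq_neg_of_add_eq_zero_left (ExteriorAlgebra.ι_add_mul_swap a (ω 0))
    calc ExteriorAlgebra.ι R a * (ExteriorAlgebra.ι R (ω 0) * ExteriorAlgebra.ιMulti R q (Matrix.vecTail ω))
        = (ExteriorAlgebra.ι R a * ExteriorAlgebra.ι R (ω 0)) * ExteriorAlgebra.ιMulti R q (Matrix.vecTail ω) := by
          rw [mul_assoc]
      _ = -(ExteriorAlgebra.ι R (ω 0) * (ExteriorAlgebra.ι R a * ExteriorAlgebra.ιMulti R q (Matrix.vecTail ω))) := by
          rw [hswap, neg_mul, mul_assoc]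
      _ = -(ExteriorAlgebra.ι R (ω 0) * (((-1 : R) ^ q) • (ExteriorAlgebra.ιMulti R q (Matrix.vecTail ω) * ExteriorAlgebra.ι R a))) := by
          rw [ih]
      _ = ((-1 : R) ^ (q + 1)) • (ExteriorAlgebra.ι R (ω 0) * ExteriorAlgebra.ιMulti R q (Matrix.vecTail ω) * ExteriorAlgebra.ι R a) := by
          rw [mul_smul_comm, pow_succ]
          rw [← neg_smul, ← mul_assoc]
          congr 1
          ring

/-- The odd differential `e(x₀, x₁) = (e₁ x₁, e₀ x₀)` of a matrix factorization on the
total module `E₀ × E₁`. -/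
noncomputable def mfDiff {S E₀ E₁ : Type*} [CommRing S]
    [AddCommGroup E₀] [AddCommGroup E₁] [Module S E₀] [Module S E₁]
    (e₀ : E₀ →ₗ[S] E₁) (e₁ : E₁ →ₗ[S] E₀) : (E₀ × E₁) →ₗ[S] (E₀ × E₁) :=
  LinearMap.prod (e₁ ∘ₗ LinearMap.snd S E₀ E₁) (e₀ ∘ₗ LinearMap.fst S E₀ E₁)

/-- A pair of connections on the graded components assembled on the total module. -/
noncomputable def connPair {k S E₀ E₁ : Type*} [Field k] [CommRing S] [Algebra k S]
    [AddCommGroup E₀] [AddCommGroup E₁] [Module S E₀] [Module S E₁]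
    [Module k E₀] [Module k E₁] [IsScalarTower k S E₀] [IsScalarTower k S E₁]
    (na₀ : E₀ →ₗ[k] (Ω[S⁄k] ⊗[S] E₀)) (na₁ : E₁ →ₗ[k] (Ω[S⁄k] ⊗[S] E₁)) :
    (E₀ × E₁) → (Ω[S⁄k] ⊗[S] (E₀ × E₁)) :=
  fun x => (LinearMap.lTensor (Ω[S⁄k]) (LinearMap.inl S E₀ E₁)) (na₀ x.1)
    + (LinearMap.lTensor (Ω[S⁄k]) (LinearMap.inr S E₀ E₁)) (na₁ x.2)

/-- Let `(E, e)` be a matrix factorization of `w` with connection `∇`,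
`θ = [∇, e]`, and `Φ_q = (1/q!)·(∧ ⊗ 1) ∘ θ^q` (with `Φ_{-1} = 0`), where `∧` is the
canonical antisymmetrization `Ω^{⊗q} → ⋀^q Ω` (valued in the exterior algebra of `Ω`).
Then for every `q ≥ 0`, `dw ∧ Φ_{q-1}(x) + (−1)^q (1 ⊗ e)(Φ_q x) = Φ_q (e x)`;
i.e. `exp(at(E)) = Σ_q [∇,e]^q / q!` is a closed degree-0 morphism of `w`-curved modules
`E → Ω_{dw} ⊗ E`.  (Stated below separately for `q = 0` and for `q + 1`.) -/
theorem stmt_13 {k : Type*} [Field k] [CharZero k]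
    {S : Type*} [CommRing S] [Algebra k S] (w : S)
    {E₀ E₁ : Type*} [AddCommGroup E₀] [AddCommGroup E₁]
    [Module S E₀] [Module S E₁] [Module k E₀] [Module k E₁]
    [IsScalarTower k S E₀] [IsScalarTower k S E₁]
    [Module.Free S E₀] [Module.Finite S E₀] [Module.Free S E₁] [Module.Finite S E₁]
    (e₀ : E₀ →ₗ[S] E₁) (e₁ : E₁ →ₗ[S] E₀)
    (he₀ : e₁ ∘ₗ e₀ = w • (LinearMap.id : E₀ →ₗ[S] E₀))
    (he₁ : e₀ ∘ₗ e₁ = w • (LinearMap.id : E₁ →ₗ[S] E₁))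
    (na₀ : E₀ →ₗ[k] (Ω[S⁄k] ⊗[S] E₀)) (na₁ : E₁ →ₗ[k] (Ω[S⁄k] ⊗[S] E₁))
    (hna₀ : ∀ (a : S) (x : E₀),
      na₀ (a • x) = (KaehlerDifferential.D k S a) ⊗ₜ[S] x + a • na₀ x)
    (hna₁ : ∀ (a : S) (x : E₁),
      na₁ (a • x) = (KaehlerDifferential.D k S a) ⊗ₜ[S] x + a • na₁ x)
    (θ : (E₀ × E₁) →ₗ[S] (Ω[S⁄k] ⊗[S] (E₀ × E₁)))
    (hθ : ∀ x : E₀ × E₁,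
      θ x = connPair na₀ na₁ (mfDiff e₀ e₁ x)
        - (LinearMap.lTensor (Ω[S⁄k]) (mfDiff e₀ e₁)) (connPair na₀ na₁ x))
    (app : ∀ q : ℕ,
      ((⨂[S] (_ : Fin q), Ω[S⁄k]) ⊗[S] (Ω[S⁄k] ⊗[S] (E₀ × E₁))) →ₗ[S]
        ((⨂[S] (_ : Fin (q + 1)), Ω[S⁄k]) ⊗[S] (E₀ × E₁)))
    (happ : ∀ (q : ℕ) (ω : Fin q → Ω[S⁄k]) (μ : Ω[S⁄k]) (x : E₀ × E₁),
      app q ((tprod S ω) ⊗ₜ[S] (μ ⊗ₜ[S] x)) = (PiTensorProduct.tprod S (Fin.snoc ω μ)) ⊗ₜ[S] x)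
    (Θ : ∀ q : ℕ, (E₀ × E₁) →ₗ[S] ((⨂[S] (_ : Fin q), Ω[S⁄k]) ⊗[S] (E₀ × E₁)))
    (hΘ₀ : ∀ x : E₀ × E₁, Θ 0 x = (PiTensorProduct.tprod S (fun i : Fin 0 => i.elim0)) ⊗ₜ[S] x)
    (hΘs : ∀ q : ℕ,
      Θ (q + 1) = app q ∘ₗ (LinearMap.lTensor (⨂[S] (_ : Fin q), Ω[S⁄k]) θ) ∘ₗ Θ q)
    (wedge : ∀ q : ℕ,
      (⨂[S] (_ : Fin q), Ω[S⁄k]) →ₗ[S] ExteriorAlgebra S (Ω[S⁄k]))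
    (hwedge : ∀ (q : ℕ) (ω : Fin q → Ω[S⁄k]),
      wedge q (tprod S ω) = ExteriorAlgebra.ιMulti S q ω)
    (Φ : ∀ q : ℕ, (E₀ × E₁) →ₗ[S] (ExteriorAlgebra S (Ω[S⁄k]) ⊗[S] (E₀ × E₁)))
    (hΦ : ∀ q : ℕ,
      Φ q = (algebraMap k S ((q.factorial : k)⁻¹)) •
        ((TensorProduct.map (wedge q) LinearMap.id) ∘ₗ Θ q)) :
    (∀ x : E₀ × E₁,
      (LinearMap.lTensor (ExteriorAlgebra S (Ω[S⁄k])) (mfDiff e₀ e₁)) (Φ 0 x)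
        = Φ 0 (mfDiff e₀ e₁ x)) ∧
    (∀ (q : ℕ) (x : E₀ × E₁),
      (LinearMap.rTensor (E₀ × E₁)
          (LinearMap.mulLeft S (ExteriorAlgebra.ι S (KaehlerDifferential.D k S w)))) (Φ q x)
        + ((-1 : S) ^ (q + 1)) •
            (LinearMap.lTensor (ExteriorAlgebra S (Ω[S⁄k])) (mfDiff e₀ e₁)) (Φ (q + 1) x)
        = Φ (q + 1) (mfDiff e₀ e₁ x)) := by
  classical
  set Ω := Ω[S⁄k]
  set Λ := ExteriorAlgebra S Ω with hΛdef
  set E := E₀ × E₁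
  set e : E →ₗ[S] E := mfDiff e₀ e₁ with hedef
  set dw := KaehlerDifferential.D k S w with hdw
  -- e ∘ e = w • id
  have hcomp : e ∘ₗ e = w • (LinearMap.id : E →ₗ[S] E) := by
    apply LinearMap.ext
    intro x
    have h0 : e₁ (e₀ x.1) = w • x.1 := congrFun (congrArg DFunLike.coe he₀) x.1
    have h1 : e₀ (e₁ x.2) = w • x.2 := congrFun (congrArg DFunLike.coe he₁) x.2
    show (mfDiff e₀ e₁) ((mfDiff e₀ e₁) x) = w • x
    unfold mfDiff
    ext
    · simpa using (show e₁ (e₀ x.1) = (w • x).1 from h0)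
    · simpa using (show e₀ (e₁ x.2) = (w • x).2 from h1)
  have hee : ∀ x : E, e (e x) = w • x := fun x => congrFun (congrArg DFunLike.coe hcomp) x
  -- Leibniz rule for connPair
  have hconn : ∀ (a : S) (x : E),
      connPair na₀ na₁ (a • x) = (KaehlerDifferential.D k S a) ⊗ₜ[S] x + a • connPair na₀ na₁ x := by
    intro a x
    show (LinearMap.lTensor Ω (LinearMap.inl S E₀ E₁)) (na₀ (a • x).1)
        + (LinearMap.lTensor Ω (LinearMap.inr S E₀ E₁)) (na₁ (a • x).2) = _
    have h1 : (a • x).1 = a • x.1 := rfl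
    have h2 : (a • x).2 = a • x.2 := rfl
    rw [h1, h2, hna₀, hna₁, map_add, map_add, map_smul, map_smul,
      LinearMap.lTensor_tmul, LinearMap.lTensor_tmul]
    have hx : ((LinearMap.inl S E₀ E₁) x.1 : E) + ((LinearMap.inr S E₀ E₁) x.2) = x := by
      simp
    have : (KaehlerDifferential.D k S a) ⊗ₜ[S] ((LinearMap.inl S E₀ E₁) x.1 : E)
        + (KaehlerDifferential.D k S a) ⊗ₜ[S] ((LinearMap.inr S E₀ E₁) x.2 : E)
        = (KaehlerDifferential.D k S a) ⊗ₜ[S] x := by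
      rw [← TensorProduct.tmul_add, hx]
    show _ = (KaehlerDifferential.D k S a) ⊗ₜ[S] x + a •
      ((LinearMap.lTensor Ω (LinearMap.inl S E₀ E₁)) (na₀ x.1)
        + (LinearMap.lTensor Ω (LinearMap.inr S E₀ E₁)) (na₁ x.2))
    rw [← this]
    abel_nf
    rw [smul_add]
    abel
  -- the fundamental anticommutation relation
  have hA : ∀ x : E, θ (e x) + (LinearMap.lTensor Ω e) (θ x) = dw ⊗ₜ[S] x := by
    intro x
    rw [hθ (e x), hθ x, map_sub, hee, hconn]
    have hlt : (LinearMap.lTensor Ω e) ((LinearMap.lTensor Ω e) (connPair na₀ na₁ x))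
        = w • connPair na₀ na₁ x := by
      rw [← LinearMap.comp_apply, ← LinearMap.lTensor_comp, hcomp,
        LinearMap.lTensor_smul, LinearMap.lTensor_id]
      rfl
    rw [hlt, hdw]
    abel
  -- the multiplication map G
  obtain ⟨G, hG⟩ : ∃ G : (Λ ⊗[S] (Ω ⊗[S] E)) →ₗ[S] (Λ ⊗[S] E),
      ∀ (l : Λ) (μ : Ω) (y : E),
        G (l ⊗ₜ[S] (μ ⊗ₜ[S] y)) = (l * ExteriorAlgebra.ι S μ) ⊗ₜ[S] y := by
    refine ⟨(LinearMap.rTensor E (LinearMap.mul' S Λ)) ∘ₗ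
      (TensorProduct.assoc S Λ Λ E).symm.toLinearMap ∘ₗ
      (LinearMap.lTensor Λ (LinearMap.rTensor E (ExteriorAlgebra.ι S))), ?_⟩
    intro l μ y
    simp [LinearMap.mul'_apply]
  obtain ⟨F, hFq⟩ : ∃ F : ∀ q : ℕ, E →ₗ[S] (Λ ⊗[S] E),
      ∀ q, F q = (TensorProduct.map (wedge q) LinearMap.id) ∘ₗ Θ q := ⟨_, fun _ => rfl⟩
  set D : Λ ⊗[S] E →ₗ[S] Λ ⊗[S] E :=
    LinearMap.rTensor E (LinearMap.mulLeft S (ExteriorAlgebra.ι S dw)) with hD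
  set Rr : Λ ⊗[S] E →ₗ[S] Λ ⊗[S] E :=
    LinearMap.rTensor E (LinearMap.mulRight S (ExteriorAlgebra.ι S dw)) with hR
  -- G intertwines lTensor e
  have hGe : ∀ (l : Λ) (m : Ω ⊗[S] E),
      G (l ⊗ₜ[S] ((LinearMap.lTensor Ω e) m)) = (LinearMap.lTensor Λ e) (G (l ⊗ₜ[S] m)) := by
    intro l m
    induction m using TensorProduct.induction_on with
    | zero => simp
    | tmul μ y => rw [LinearMap.lTensor_tmul, hG, hG, LinearMap.lTensor_tmul]
    | add m n hm hn =>
      rw [map_add, TensorProduct.tmul_add, map_add, hm, hn, TensorProduct.tmul_add, map_add,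
        map_add]
  have hGD : ∀ (l : Λ) (m : Ω ⊗[S] E),
      D (G (l ⊗ₜ[S] m)) = G ((ExteriorAlgebra.ι S dw * l) ⊗ₜ[S] m) := by
    intro l m
    induction m using TensorProduct.induction_on with
    | zero => simp
    | tmul μ y =>
      rw [hG, hG, hD, LinearMap.rTensor_tmul, LinearMap.mulLeft_apply, mul_assoc]
    | add m n hm hn =>
      rw [TensorProduct.tmul_add, TensorProduct.tmul_add, map_add, map_add, map_add, hm, hn]
  have hTep : ∀ v : Λ ⊗[S] E,
      G ((LinearMap.lTensor Λ θ) ((LinearMap.lTensor Λ e) v))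
        + (LinearMap.lTensor Λ e) (G ((LinearMap.lTensor Λ θ) v)) = Rr v := by
    intro v
    induction v using TensorProduct.induction_on with
    | zero => simp
    | tmul l x =>
      rw [LinearMap.lTensor_tmul, LinearMap.lTensor_tmul, LinearMap.lTensor_tmul,
        ← hGe l (θ x), ← map_add, ← TensorProduct.tmul_add, hA x, hG, hR,
        LinearMap.rTensor_tmul, LinearMap.mulRight_apply]
    | add v₁ v₂ h₁ h₂ =>
      simp only [map_add]
      rw [← h₁, ← h₂]
      abel
  have hDT : ∀ v : Λ ⊗[S] E,
      D (G ((LinearMap.lTensor Λ θ) v)) = G ((LinearMap.lTensor Λ θ) (D v)) := by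
    intro v
    induction v using TensorProduct.induction_on with
    | zero => simp
    | tmul l x =>
      rw [LinearMap.lTensor_tmul, hGD, hD, LinearMap.rTensor_tmul, LinearMap.mulLeft_apply,
        LinearMap.lTensor_tmul]
    | add v₁ v₂ h₁ h₂ => simp only [map_add, h₁, h₂]
  -- compatibility of app with wedge
  have hcomm : ∀ (q : ℕ) (z : (⨂[S] (_ : Fin q), Ω) ⊗[S] (Ω ⊗[S] E)),
      (TensorProduct.map (wedge (q + 1)) LinearMap.id) (app q z)
        = G ((TensorProduct.map (wedge q) LinearMap.id) z) := by
    intro q z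
    induction z using TensorProduct.induction_on with
    | zero => simp
    | tmul t m =>
      induction t using PiTensorProduct.induction_on with
      | smul_tprod r ω =>
        induction m using TensorProduct.induction_on with
        | zero => simp
        | tmul μ y =>
          rw [← TensorProduct.smul_tmul', map_smul, map_smul, map_smul, map_smul, happ,
            TensorProduct.map_tmul, TensorProduct.map_tmul, hwedge, hwedge]
          simp only [LinearMap.id_apply]
          rw [hG, iotaMulti_snoc]
        | add m n hm hn =>
          simp only [TensorProduct.tmul_add, map_add, hm, hn]
      | add t₁ t₂ h₁ h₂ =>
        simp only [TensorProduct.add_tmul, map_add, h₁, h₂]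
    | add z₁ z₂ h₁ h₂ => simp only [map_add, h₁, h₂]
  -- wedge commutes with lTensor θ
  have hswapθ : ∀ (q : ℕ) (u : (⨂[S] (_ : Fin q), Ω) ⊗[S] E),
      (TensorProduct.map (wedge q) LinearMap.id)
          ((LinearMap.lTensor (⨂[S] (_ : Fin q), Ω) θ) u)
        = (LinearMap.lTensor Λ θ) ((TensorProduct.map (wedge q) LinearMap.id) u) := by
    intro q u
    induction u using TensorProduct.induction_on with
    | zero => simp
    | tmul t x =>
      simp only [LinearMap.lTensor_tmul, TensorProduct.map_tmul, LinearMap.id_apply]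
    | add u₁ u₂ h₁ h₂ => simp only [map_add, h₁, h₂]
  have hFrec : ∀ (q : ℕ) (x : E), F (q + 1) x = G ((LinearMap.lTensor Λ θ) (F q x)) := by
    intro q x
    rw [hFq, hFq, hΘs q]
    simp only [LinearMap.comp_apply]
    rw [hcomm q, hswapθ q]
  have hRF : ∀ (q : ℕ) (x : E), Rr (F q x) = ((-1 : S) ^ q) • D (F q x) := by
    intro q x
    rw [hFq]
    simp only [LinearMap.comp_apply]
    have hsq : ((-1 : S) ^ q) * ((-1 : S) ^ q) = 1 := by
      rw [← pow_add, ← two_mul, pow_mul]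
      norm_num
    induction (Θ q x) using TensorProduct.induction_on with
    | zero => simp
    | tmul t y =>
      induction t using PiTensorProduct.induction_on with
      | smul_tprod r ω =>
        have hpure : Rr ((TensorProduct.map (wedge q) LinearMap.id)
              ((tprod S ω) ⊗ₜ[S] y))
            = ((-1 : S) ^ q) • D ((TensorProduct.map (wedge q) LinearMap.id)
              ((tprod S ω) ⊗ₜ[S] y)) := by
          rw [TensorProduct.map_tmul, hwedge, LinearMap.id_apply, hR, hD,
            LinearMap.rTensor_tmul, LinearMap.rTensor_tmul, LinearMap.mulRight_apply,
            LinearMap.mulLeft_apply, iota_mul_iotaMulti, TensorProduct.smul_tmul',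
            smul_smul, hsq, one_smul]
        rw [← TensorProduct.smul_tmul', map_smul, map_smul, map_smul, hpure, smul_comm]
      | add t₁ t₂ h₁ h₂ =>
        rw [TensorProduct.add_tmul, map_add, map_add, map_add, h₁, h₂, smul_add]
    | add z₁ z₂ h₁ h₂ => rw [map_add, map_add, map_add, h₁, h₂, smul_add]
  have hF0e : ∀ x : E, F 0 (e x) = (LinearMap.lTensor Λ e) (F 0 x) := by
    intro x
    rw [hFq]
    simp only [LinearMap.comp_apply]
    rw [hΘ₀, hΘ₀, TensorProduct.map_tmul, TensorProduct.map_tmul, LinearMap.lTensor_tmul,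
      LinearMap.id_apply, LinearMap.id_apply]
  -- the main induction
  have main : ∀ (q : ℕ) (x : E),
      F (q + 1) (e x) = (((q : ℕ) + 1 : ℕ) : S) • D (F q x)
        + ((-1 : S) ^ (q + 1)) • (LinearMap.lTensor Λ e) (F (q + 1) x) := by
    intro q
    induction q with
    | zero =>
      intro x
      rw [hFrec 0, hF0e x, eq_sub_of_add_eq (hTep (F 0 x)), ← hFrec 0 x, hRF 0 x]
      simp [sub_eq_add_neg]
      exact (neg_one_smul S _).symm
    | succ q ih =>
      intro x
      rw [hFrec (q + 1) (e x), ih x, map_add, map_smul, map_smul, map_add, map_smul,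
        map_smul, ← hDT (F q x), ← hFrec q x, eq_sub_of_add_eq (hTep (F (q + 1) x)),
        ← hFrec (q + 1) x, hRF (q + 1) x]
      have hsq : ((-1 : S) ^ (q + 1)) * ((-1 : S) ^ (q + 1)) = 1 := by
        rw [← pow_add, ← two_mul, pow_mul]
        norm_num
      rw [smul_sub, smul_smul, hsq, one_smul]
      push_cast
      match_scalars <;> ring
  have hFx : ∀ (p : ℕ) (y : E),
      (TensorProduct.map (wedge p) LinearMap.id) (Θ p y) = F p y := by
    intro p y
    rw [hFq p, LinearMap.comp_apply]
  constructor
  · intro x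
    rw [hΦ 0]
    simp only [LinearMap.smul_apply, LinearMap.comp_apply, map_smul]
    congr 1
    rw [hFx, hFx, ← hF0e x]
  · intro q x
    have h3 : ((q.factorial : ℕ) : k) ≠ 0 := Nat.cast_ne_zero.2 (Nat.factorial_ne_zero q)
    have h4 : (((q + 1 : ℕ) : ℕ) : k) ≠ 0 := Nat.cast_ne_zero.2 (Nat.succ_ne_zero q)
    have hkey : (algebraMap k S) ((((q + 1).factorial : ℕ) : k))⁻¹ * (((q + 1 : ℕ) : ℕ) : S)
        = (algebraMap k S) (((q.factorial : ℕ) : k))⁻¹ := by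
      have h1 : (((q + 1 : ℕ) : ℕ) : S) = algebraMap k S (((q + 1 : ℕ) : ℕ) : k) := by
        rw [_root_.map_natCast]
      rw [h1, ← _root_.map_mul]
      congr 1
      have h2 : (((q + 1).factorial : ℕ) : k) = (((q + 1 : ℕ) : ℕ) : k) * ((q.factorial : ℕ) : k) := by
        push_cast [Nat.factorial_succ]
        ring
      have h5 : ((q : k) + 1) * ((q.factorial : ℕ) : k) ≠ 0 :=
        mul_ne_zero (Nat.cast_add_one_ne_zero q) h3
      field_simp [h2]
      exact h2.symm
    rw [hΦ q, hΦ (q + 1)]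
    simp only [LinearMap.smul_apply, LinearMap.comp_apply, map_smul]
    rw [hFx, hFx, hFx, main q x, smul_add, smul_smul, smul_smul, smul_smul, hkey,
      mul_comm ((algebraMap k S) ((((q + 1).factorial : ℕ) : k))⁻¹) (((-1 : S)) ^ (q + 1))]
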